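/- There exists a constant C₀ ≥ 1, depending only on κ, such that for every C ≥ C₀ the following safe zone stability property holds. Let d ≥ 1, κ > 1, U ≥ 1, t > 0, write ⟨a⟩ = max(1,a), and let R, R' be reals with R' ≥ 4R and R ≥ (16C⟨Ut⟩)^{κ/(κ-1)}. Let u₀ : ℝ^d → ℝ^d satisfy ‖u₀(w)‖ ≤ U(1 + ‖w‖)^{1/κ} for every w with R ≤ ‖w‖ ≤ R'. For τ ∈ [0,t] set I(τ) = [R + 4(C−1)Uτ·R^{1/κ}, R' − 4(C−1)Uτ·R'^{1/κ}]. Then every differentiable curve y : [0,t] → ℝ^d with y'(s) = u₀(y(s)) for all s ∈ [0,t] and ‖y(0)‖ ∈ I(t) satisfies, for every s ∈ [0,t]: ‖y(s)‖ ∈ I(t−s) (in particular R ≤ ‖y(s)‖ ≤ R'), ‖y(0)‖/2 ≤ ‖y(s)‖ ≤ 2‖y(0)‖, and ‖y(s) − y(0)‖ ≤ (C−1)·Ut·‖y(0)‖^{1/κ}. -/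

import Mathlib

open Set Filter

private lemma rpow_growth_aux {κ c Z x : ℝ} (hκ : 1 ≤ κ) (hc : 1 ≤ c) (hZ : 0 ≤ Z)
    (hx : 0 ≤ 1 + x) (h : 1 + x ≤ c * Z) : (1 + x) ^ (1/κ) ≤ c * Z ^ (1/κ) := by
  have hκ0 : (0:ℝ) < κ := by linarith
  have hexp : 1/κ ≤ 1 := by rw [div_le_one hκ0]; exact hκ
  have h1 : (1+x)^(1/κ) ≤ (c*Z)^(1/κ) := Real.rpow_le_rpow hx h (by positivity)
  have h2 : (c*Z)^(1/κ) = c^(1/κ) * Z^(1/κ) := Real.mul_rpow (by linarith) hZ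
  have h3 : c^(1/κ) ≤ c := by
    calc c^(1/κ) ≤ c^(1:ℝ) := Real.rpow_le_rpow_of_exponent_le hc hexp
    _ = c := Real.rpow_one c
  have h4 : (0:ℝ) ≤ Z^(1/κ) := Real.rpow_nonneg hZ _
  calc (1+x)^(1/κ) ≤ c^(1/κ) * Z^(1/κ) := by rw [← h2]; exact h1
  _ ≤ c * Z^(1/κ) := mul_le_mul_of_nonneg_right h3 h4

set_option maxHeartbeats 1000000 in
/-- Safe zone stability property (core case (i) of the proof of Lemma 3.2,
eqs. (3.5)–(3.9)): there is `C₀ ≥ 1` depending only on `κ` such that for all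
`C ≥ C₀`, any integral curve of a velocity `u₀` which grows sublinearly like
`U(1+‖·‖)^{1/κ}` on the safe annulus `{R ≤ ‖w‖ ≤ R'}`, started with
`‖y 0‖ ∈ I(t)`, satisfies `‖y s‖ ∈ I(t-s)`, `‖y 0‖/2 ≤ ‖y s‖ ≤ 2‖y 0‖` and
`‖y s - y 0‖ ≤ (C-1)Ut‖y 0‖^{1/κ}` for all `s ∈ [0,t]`, where
`I(τ) = [R + 4(C-1)Uτ·R^{1/κ}, R' - 4(C-1)Uτ·R'^{1/κ}]`. -/
theorem safe_zone_stability (κ : ℝ) (hκ : 1 < κ) :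
    ∃ C₀ : ℝ, 1 ≤ C₀ ∧
      ∀ C : ℝ, C₀ ≤ C →
        ∀ (d : ℕ), 1 ≤ d →
          ∀ U t R R' : ℝ, 1 ≤ U → 0 < t → 4 * R ≤ R' →
            (16 * C * max 1 (U * t)) ^ (κ / (κ - 1)) ≤ R →
            ∀ u₀ : EuclideanSpace ℝ (Fin d) → EuclideanSpace ℝ (Fin d),
              (∀ w, R ≤ ‖w‖ → ‖w‖ ≤ R' → ‖u₀ w‖ ≤ U * (1 + ‖w‖) ^ (1 / κ)) →
              ∀ y : ℝ → EuclideanSpace ℝ (Fin d),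
                (∀ s ∈ Set.Icc (0 : ℝ) t, HasDerivAt y (u₀ (y s)) s) →
                ‖y 0‖ ∈ Set.Icc (R + 4 * (C - 1) * U * t * R ^ (1 / κ))
                    (R' - 4 * (C - 1) * U * t * R' ^ (1 / κ)) →
                ∀ s ∈ Set.Icc (0 : ℝ) t,
                  ‖y s‖ ∈ Set.Icc (R + 4 * (C - 1) * U * (t - s) * R ^ (1 / κ))
                      (R' - 4 * (C - 1) * U * (t - s) * R' ^ (1 / κ)) ∧
                  ‖y 0‖ / 2 ≤ ‖y s‖ ∧ ‖y s‖ ≤ 2 * ‖y 0‖ ∧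
                  ‖y s - y 0‖ ≤ (C - 1) * U * t * ‖y 0‖ ^ (1 / κ) := by
  refine ⟨4, by norm_num, ?_⟩
  intro C hC d hd U t R R' hU ht hRR' hRbig u₀ hu₀ y hy hy0
  have hκ0 : (0:ℝ) < κ := by linarith
  have hκ1 : (0:ℝ) < κ - 1 := by linarith
  have hκ0' : κ ≠ 0 := ne_of_gt hκ0
  have hκ1' : κ - 1 ≠ 0 := ne_of_gt hκ1
  have hU0 : (0:ℝ) < U := by linarith
  have hexp_nonneg : (0:ℝ) ≤ (κ-1)/κ := by positivity
  have hmax1 : (1:ℝ) ≤ max 1 (U*t) := le_max_left _ _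
  have hmaxUt : U*t ≤ max 1 (U*t) := le_max_right _ _
  have hUt0 : 0 < U * t := mul_pos hU0 ht
  have hX0 : (0:ℝ) < 16*C*max 1 (U*t) := by nlinarith
  have hX64 : (64:ℝ) ≤ 16*C*max 1 (U*t) := by nlinarith
  have hXR : 16*C*max 1 (U*t) ≤ R := by
    calc 16*C*max 1 (U*t) = (16*C*max 1 (U*t)) ^ (1:ℝ) := (Real.rpow_one _).symm
    _ ≤ (16*C*max 1 (U*t)) ^ (κ/(κ-1)) := by
        apply Real.rpow_le_rpow_of_exponent_le (by linarith)
        rw [le_div_iff₀ hκ1]; linarith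
    _ ≤ R := hRbig
  have hR0 : (0:ℝ) < R := by linarith
  have hR1 : (1:ℝ) ≤ R := by linarith
  have hR'0 : (0:ℝ) < R' := by linarith
  have hR'1 : (1:ℝ) ≤ R' := by linarith
  have hpow : 16*C*max 1 (U*t) ≤ R ^ ((κ-1)/κ) := by
    have h1 : ((16*C*max 1 (U*t)) ^ (κ/(κ-1))) ^ ((κ-1)/κ) ≤ R ^ ((κ-1)/κ) :=
      Real.rpow_le_rpow (Real.rpow_nonneg hX0.le _) hRbig hexp_nonneg
    have h2 : ((16*C*max 1 (U*t)) ^ (κ/(κ-1))) ^ ((κ-1)/κ) = 16*C*max 1 (U*t) := by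
      rw [← Real.rpow_mul hX0.le]
      rw [show (κ/(κ-1)) * ((κ-1)/κ) = 1 by field_simp]
      exact Real.rpow_one _
    rw [h2] at h1; exact h1
  have hsplit : R ^ ((κ-1)/κ) * R ^ (1/κ) = R := by
    rw [← Real.rpow_add hR0, show (κ-1)/κ + 1/κ = 1 by field_simp; ring, Real.rpow_one]
  have hRk : (0:ℝ) < R ^ (1/κ) := Real.rpow_pos_of_pos hR0 _
  have hR'k : (0:ℝ) < R' ^ (1/κ) := Real.rpow_pos_of_pos hR'0 _
  -- smallness of the lower barrier width
  have h4small : 4*(C-1)*U*t*R^(1/κ) ≤ R/4 := by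
    have e1 : 4*(C-1)*U*t ≤ (16*C*max 1 (U*t))/4 := by nlinarith
    calc 4*(C-1)*U*t*R^(1/κ) ≤ ((16*C*max 1 (U*t))/4) * R^(1/κ) :=
          mul_le_mul_of_nonneg_right e1 hRk.le
    _ ≤ (R^((κ-1)/κ)/4) * R^(1/κ) :=
          mul_le_mul_of_nonneg_right (by linarith) hRk.le
    _ = R/4 := by rw [div_mul_eq_mul_div, hsplit]
  have ha_low : R + 4*(C-1)*U*t*R^(1/κ) ≤ ‖y 0‖ := hy0.1
  have ha_up : ‖y 0‖ ≤ R' - 4*(C-1)*U*t*R'^(1/κ) := hy0.2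
  have hbarR : 0 ≤ 4*(C-1)*U*t*R^(1/κ) :=
    mul_nonneg (mul_nonneg (mul_nonneg (by linarith) hU0.le) ht.le) hRk.le
  have hbarR' : 0 ≤ 4*(C-1)*U*t*R'^(1/κ) :=
    mul_nonneg (mul_nonneg (mul_nonneg (by linarith) hU0.le) ht.le) hR'k.le
  have haR : R ≤ ‖y 0‖ := by linarith
  have ha0 : (0:ℝ) < ‖y 0‖ := by linarith
  have ha1 : (1:ℝ) ≤ ‖y 0‖ := by linarith
  have haR' : ‖y 0‖ ≤ R' := by linarith
  have hak : (0:ℝ) < ‖y 0‖^(1/κ) := Real.rpow_pos_of_pos ha0 _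
  have hapow : R^((κ-1)/κ) ≤ ‖y 0‖^((κ-1)/κ) := Real.rpow_le_rpow hR0.le haR hexp_nonneg
  have hasplit : ‖y 0‖^((κ-1)/κ) * ‖y 0‖^(1/κ) = ‖y 0‖ := by
    rw [← Real.rpow_add ha0, show (κ-1)/κ + 1/κ = 1 by field_simp; ring, Real.rpow_one]
  have hdispa : (C-1)*U*t*‖y 0‖^(1/κ) ≤ ‖y 0‖/16 := by
    have e1 : (C-1)*U*t ≤ (16*C*max 1 (U*t))/16 := by nlinarith
    calc (C-1)*U*t*‖y 0‖^(1/κ) ≤ ((16*C*max 1 (U*t))/16) * ‖y 0‖^(1/κ) :=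
          mul_le_mul_of_nonneg_right e1 hak.le
    _ ≤ (‖y 0‖^((κ-1)/κ)/16) * ‖y 0‖^(1/κ) :=
          mul_le_mul_of_nonneg_right (by linarith) hak.le
    _ = ‖y 0‖/16 := by rw [div_mul_eq_mul_div, hasplit]
  -- basic analytic tools
  have hcont : ContinuousOn y (Set.Icc 0 t) := fun s hs =>
    ((hy s hs).continuousAt).continuousWithinAt
  have hfc : ContinuousOn (fun s => ‖y s‖) (Set.Icc 0 t) := hcont.norm
  have disp : ∀ s₁ s₂ B : ℝ, 0 ≤ s₁ → s₂ ≤ t →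
      (∀ τ ∈ Set.Icc s₁ s₂, ‖u₀ (y τ)‖ ≤ B) →
      ∀ x ∈ Set.Icc s₁ s₂, ‖y x - y s₁‖ ≤ B * (x - s₁) := by
    intro s₁ s₂ B h0 h2 hb
    exact norm_image_sub_le_of_norm_deriv_le_segment'
      (fun τ hτ => (hy τ ⟨h0.trans hτ.1, hτ.2.trans h2⟩).hasDerivWithinAt)
      (fun τ hτ => hb τ (Set.Ico_subset_Icc_self hτ))
  have hspeed3 : ∀ σ : ℝ, R ≤ ‖y σ‖ → ‖y σ‖ ≤ R' → ‖y σ‖ ≤ 2*‖y 0‖ →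
      ‖u₀ (y σ)‖ ≤ 3*U*‖y 0‖^(1/κ) := by
    intro σ h1 h2 h3
    have h5 : (1 + ‖y σ‖)^(1/κ) ≤ 3 * ‖y 0‖^(1/κ) :=
      rpow_growth_aux hκ.le (by norm_num) ha0.le (by positivity) (by linarith)
    calc ‖u₀ (y σ)‖ ≤ U * (1+‖y σ‖)^(1/κ) := hu₀ (y σ) h1 h2
    _ ≤ U * (3*‖y 0‖^(1/κ)) := mul_le_mul_of_nonneg_left h5 hU0.le
    _ = 3*U*‖y 0‖^(1/κ) := by ring
  -- the bootstrap set
  set S : Set ℝ := {s | s ∈ Set.Icc (0:ℝ) t ∧ ∀ τ ∈ Set.Icc (0:ℝ) s,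
      R + 4*(C-1)*U*(t-τ)*R^(1/κ) ≤ ‖y τ‖ ∧
      ‖y τ‖ ≤ R' - 4*(C-1)*U*(t-τ)*R'^(1/κ) ∧ ‖y τ‖ ≤ 2*‖y 0‖} with hSdef
  have hS0 : (0:ℝ) ∈ S := by
    refine ⟨⟨le_refl 0, ht.le⟩, ?_⟩
    intro τ hτ
    have hτ0 : τ = 0 := le_antisymm hτ.2 hτ.1
    subst hτ0
    refine ⟨by rw [sub_zero]; exact ha_low, by rw [sub_zero]; exact ha_up, by linarith⟩
  have hbdd : BddAbove S := ⟨t, fun s hs => hs.1.2⟩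
  set T := sSup S with hTdef
  have hT0 : 0 ≤ T := le_csSup hbdd hS0
  have hTt : T ≤ t := csSup_le ⟨0, hS0⟩ (fun s hs => hs.1.2)
  have hPlt : ∀ τ : ℝ, 0 ≤ τ → τ < T →
      R + 4*(C-1)*U*(t-τ)*R^(1/κ) ≤ ‖y τ‖ ∧
      ‖y τ‖ ≤ R' - 4*(C-1)*U*(t-τ)*R'^(1/κ) ∧ ‖y τ‖ ≤ 2*‖y 0‖ := by
    intro τ h0 hlt
    obtain ⟨s, hsS, hτs⟩ := exists_lt_of_lt_csSup ⟨0, hS0⟩ hlt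
    exact hsS.2 τ ⟨h0, hτs.le⟩
  have hPT : R + 4*(C-1)*U*(t-T)*R^(1/κ) ≤ ‖y T‖ ∧
      ‖y T‖ ≤ R' - 4*(C-1)*U*(t-T)*R'^(1/κ) ∧ ‖y T‖ ≤ 2*‖y 0‖ := by
    rcases eq_or_lt_of_le hT0 with h0T | h0T
    · rw [← h0T]
      exact hS0.2 0 ⟨le_rfl, le_rfl⟩
    · have hTmem : T ∈ Set.Icc (0:ℝ) t := ⟨hT0, hTt⟩
      have hclos : T ∈ closure (Set.Ico (0:ℝ) T) := by
        rw [closure_Ico (ne_of_lt h0T)]; exact ⟨hT0, le_rfl⟩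
      have hne : (nhdsWithin T (Set.Ico (0:ℝ) T)).NeBot :=
        mem_closure_iff_nhdsWithin_neBot.mp hclos
      have htd : Tendsto (fun τ => ‖y τ‖) (nhdsWithin T (Set.Ico (0:ℝ) T)) (nhds ‖y T‖) :=
        (hfc T hTmem).mono (fun x hx => ⟨hx.1, hx.2.le.trans hTt⟩)
      have hlbc : Continuous (fun τ : ℝ => R + 4*(C-1)*U*(t-τ)*R^(1/κ)) := by fun_prop
      have hubc : Continuous (fun τ : ℝ => R' - 4*(C-1)*U*(t-τ)*R'^(1/κ)) := by fun_prop
      refine ⟨?_, ?_, ?_⟩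
      · refine le_of_tendsto_of_tendsto ((hlbc.tendsto T).mono_left nhdsWithin_le_nhds) htd ?_
        filter_upwards [self_mem_nhdsWithin] with τ hτ
        exact (hPlt τ hτ.1 hτ.2).1
      · refine le_of_tendsto_of_tendsto htd ((hubc.tendsto T).mono_left nhdsWithin_le_nhds) ?_
        filter_upwards [self_mem_nhdsWithin] with τ hτ
        exact (hPlt τ hτ.1 hτ.2).2.1
      · refine le_of_tendsto htd ?_
        filter_upwards [self_mem_nhdsWithin] with τ hτ
        exact (hPlt τ hτ.1 hτ.2).2.2
  have hTS : T ∈ S := by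
    refine ⟨⟨hT0, hTt⟩, ?_⟩
    intro τ hτ
    rcases lt_or_eq_of_le hτ.2 with h | h
    · exact hPlt τ hτ.1 h
    · rw [h]; exact hPT
  -- bound on speed along any certified interval
  have hBall : ∀ s' : ℝ, s' ∈ S → ∀ τ ∈ Set.Icc (0:ℝ) s',
      ‖u₀ (y τ)‖ ≤ 3*U*‖y 0‖^(1/κ) := by
    intro s' hs' τ hτ
    have hP := hs'.2 τ hτ
    have htτ : τ ≤ t := hτ.2.trans hs'.1.2
    have h1 : 0 ≤ 4*(C-1)*U*(t-τ)*R^(1/κ) :=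
      mul_nonneg (mul_nonneg (mul_nonneg (by linarith) hU0.le) (by linarith)) hRk.le
    have h2 : 0 ≤ 4*(C-1)*U*(t-τ)*R'^(1/κ) :=
      mul_nonneg (mul_nonneg (mul_nonneg (by linarith) hU0.le) (by linarith)) hR'k.le
    exact hspeed3 τ (by linarith [hP.1]) (by linarith [hP.2.1]) hP.2.2
  -- the set S is all of [0, t]
  have hTeq : T = t := by
    by_contra hne
    have hTlt : T < t := lt_of_le_of_ne hTt hne
    -- strict margins at time T
    have hposR : 0 < 4*(C-1)*U*(t-T)*R^(1/κ) :=
      mul_pos (mul_pos (mul_pos (by linarith) hU0) (by linarith)) hRk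
    have hposR' : 0 < 4*(C-1)*U*(t-T)*R'^(1/κ) :=
      mul_pos (mul_pos (mul_pos (by linarith) hU0) (by linarith)) hR'k
    have hm1 : R < ‖y T‖ := by linarith [hPT.1]
    have hm2 : ‖y T‖ < R' := by linarith [hPT.2.1]
    have hm3 : ‖y T‖ < 2*‖y 0‖ := by
      have hdT := disp 0 T (3*U*‖y 0‖^(1/κ)) le_rfl hTt (hBall T hTS) T ⟨hT0, le_rfl⟩
      have htri : ‖y T‖ - ‖y 0‖ ≤ ‖y T - y 0‖ := norm_sub_norm_le _ _
      have c1 : (0:ℝ) ≤ 3*U*‖y 0‖^(1/κ) := by positivity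
      have e1 := mul_le_mul_of_nonneg_left hTt c1
      have e2 : 3*(U*(t*‖y 0‖^(1/κ))) ≤ (C-1)*(U*(t*‖y 0‖^(1/κ))) :=
        mul_le_mul_of_nonneg_right (by linarith) (by positivity)
      have e3 : (C-1)*(U*(t*‖y 0‖^(1/κ))) = (C-1)*U*t*‖y 0‖^(1/κ) := by ring
      have e4 : 3*U*‖y 0‖^(1/κ)*t = 3*(U*(t*‖y 0‖^(1/κ))) := by ring
      linarith [hdT, htri, hdispa, e1, e2, e3, e4, ha0]
    -- continuity extraction
    have ext : ∀ m : ℝ, 0 < m → ∃ ε : ℝ, 0 < ε ∧ T + ε ≤ t ∧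
        ∀ τ ∈ Set.Icc T (T+ε), |‖y τ‖ - ‖y T‖| < m := by
      intro m hm
      have h1 : ContinuousWithinAt (fun s => ‖y s‖) (Set.Icc 0 t) T := hfc T ⟨hT0, hTt⟩
      rw [Metric.continuousWithinAt_iff] at h1
      obtain ⟨δ, hδ0, hδ⟩ := h1 m hm
      refine ⟨min (δ/2) (t - T), lt_min (by linarith) (by linarith), ?_, ?_⟩
      · have := min_le_right (δ/2) (t - T); linarith
      · intro τ hτ
        have hle := min_le_right (δ/2) (t - T)
        have hle' := min_le_left (δ/2) (t - T)
        have hτ2 : τ ∈ Set.Icc (0:ℝ) t := ⟨hT0.trans hτ.1, by linarith [hτ.2]⟩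
        have hd : dist τ T < δ := by
          rw [Real.dist_eq, abs_of_nonneg (by linarith [hτ.1])]
          linarith [hτ.2]
        have := hδ hτ2 hd
        rwa [Real.dist_eq] at this
    -- choose the margin according to the position relative to 2R
    rcases le_or_gt (‖y T‖) (2*R) with hcase | hcase
    -- Case A : near the inner boundary
    · set m : ℝ := min (min (‖y T‖ - R) (R' - ‖y T‖)) (min (2*‖y 0‖ - ‖y T‖) R) with hmdef
      have hm : 0 < m :=
        lt_min (lt_min (by linarith) (by linarith)) (lt_min (by linarith) hR0)
      obtain ⟨ε, hε0, hεt, hεc⟩ := ext m hm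
      have hTε : T + ε ∈ S := by
        refine ⟨⟨by linarith, hεt⟩, ?_⟩
        intro τ hτ
        rcases le_or_gt τ T with hτT | hτT
        · exact hTS.2 τ ⟨hτ.1, hτT⟩
        · have hτI : τ ∈ Set.Icc T (T+ε) := ⟨hτT.le, hτ.2⟩
          have hτt : τ ≤ t := le_trans hτ.2 hεt
          have hann : ∀ σ ∈ Set.Icc T (T+ε), R ≤ ‖y σ‖ ∧ ‖y σ‖ ≤ R' := by
            intro σ hσ
            have h := abs_lt.mp (hεc σ hσ)
            have hA : m ≤ ‖y T‖ - R := (min_le_left _ _).trans (min_le_left _ _)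
            have hB : m ≤ R' - ‖y T‖ := (min_le_left _ _).trans (min_le_right _ _)
            constructor <;> linarith [h.1, h.2]
          -- part 3
          have hp3 : ‖y τ‖ ≤ 2*‖y 0‖ := by
            have h := abs_lt.mp (hεc τ hτI)
            have hCm : m ≤ 2*‖y 0‖ - ‖y T‖ := (min_le_right _ _).trans (min_le_left _ _)
            linarith [h.2]
          -- part 2 : upper barrier
          have hbnd2 : ∀ σ ∈ Set.Icc T τ, ‖u₀ (y σ)‖ ≤ 2*U*R'^(1/κ) := by
            intro σ hσ
            have hσ' : σ ∈ Set.Icc T (T+ε) := ⟨hσ.1, hσ.2.trans hτ.2⟩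
            have h := hann σ hσ'
            have h5 : (1+‖y σ‖)^(1/κ) ≤ 2*R'^(1/κ) :=
              rpow_growth_aux hκ.le (by norm_num) hR'0.le (by positivity)
                (by linarith [h.2])
            calc ‖u₀ (y σ)‖ ≤ U * (1+‖y σ‖)^(1/κ) := hu₀ (y σ) h.1 h.2
            _ ≤ U * (2*R'^(1/κ)) := mul_le_mul_of_nonneg_left h5 hU0.le
            _ = 2*U*R'^(1/κ) := by ring
          have hd2 := disp T τ (2*U*R'^(1/κ)) hT0 hτt hbnd2 τ ⟨hτT.le, le_rfl⟩
          have htri : ‖y τ‖ - ‖y T‖ ≤ ‖y τ - y T‖ := norm_sub_norm_le _ _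
          have hM' : (0:ℝ) ≤ U*((τ-T)*R'^(1/κ)) :=
            mul_nonneg hU0.le (mul_nonneg (by linarith) hR'k.le)
          have e2 : 2*U*R'^(1/κ)*(τ-T) ≤ 4*(C-1)*U*(τ-T)*R'^(1/κ) := by
            calc 2*U*R'^(1/κ)*(τ-T) = 2*(U*((τ-T)*R'^(1/κ))) := by ring
            _ ≤ (4*(C-1))*(U*((τ-T)*R'^(1/κ))) :=
                mul_le_mul_of_nonneg_right (by linarith) hM'
            _ = 4*(C-1)*U*(τ-T)*R'^(1/κ) := by ring
          have hp2 : ‖y τ‖ ≤ R' - 4*(C-1)*U*(t-τ)*R'^(1/κ) := by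
            linarith [hPT.2.1, hd2, htri, e2]
          -- part 1 : lower barrier via speed bound near the inner boundary
          have h3R : ∀ σ ∈ Set.Icc T (T+ε), ‖y σ‖ ≤ 3*R := by
            intro σ hσ
            have h := abs_lt.mp (hεc σ hσ)
            have hRm : m ≤ R := (min_le_right _ _).trans (min_le_right _ _)
            linarith [h.2]
          have hbnd1 : ∀ σ ∈ Set.Icc T τ, ‖u₀ (y σ)‖ ≤ 4*U*R^(1/κ) := by
            intro σ hσ
            have hσ' : σ ∈ Set.Icc T (T+ε) := ⟨hσ.1, hσ.2.trans hτ.2⟩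
            have h := hann σ hσ'
            have h5 : (1+‖y σ‖)^(1/κ) ≤ 4*R^(1/κ) :=
              rpow_growth_aux hκ.le (by norm_num) hR0.le (by positivity)
                (by linarith [h3R σ hσ'])
            calc ‖u₀ (y σ)‖ ≤ U * (1+‖y σ‖)^(1/κ) := hu₀ (y σ) h.1 h.2
            _ ≤ U * (4*R^(1/κ)) := mul_le_mul_of_nonneg_left h5 hU0.le
            _ = 4*U*R^(1/κ) := by ring
          have hd1 := disp T τ (4*U*R^(1/κ)) hT0 hτt hbnd1 τ ⟨hτT.le, le_rfl⟩
          have htri' : ‖y T‖ - ‖y τ‖ ≤ ‖y τ - y T‖ := by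
            have h := norm_sub_norm_le (y T) (y τ)
            rwa [norm_sub_rev] at h
          have hM : (0:ℝ) ≤ U*((τ-T)*R^(1/κ)) :=
            mul_nonneg hU0.le (mul_nonneg (by linarith) hRk.le)
          have e1 : 4*U*R^(1/κ)*(τ-T) ≤ 4*(C-1)*U*(τ-T)*R^(1/κ) := by
            calc 4*U*R^(1/κ)*(τ-T) = 4*(U*((τ-T)*R^(1/κ))) := by ring
            _ ≤ (4*(C-1))*(U*((τ-T)*R^(1/κ))) :=
                mul_le_mul_of_nonneg_right (by linarith) hM
            _ = 4*(C-1)*U*(τ-T)*R^(1/κ) := by ring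
          have hp1 : R + 4*(C-1)*U*(t-τ)*R^(1/κ) ≤ ‖y τ‖ := by
            linarith [hPT.1, hd1, htri', e1]
          exact ⟨hp1, hp2, hp3⟩
      have : T + ε ≤ T := le_csSup hbdd hTε
      linarith
    -- Case B : far from the inner boundary
    · set m : ℝ := min (min (‖y T‖ - R) (R' - ‖y T‖))
          (min (2*‖y 0‖ - ‖y T‖) (‖y T‖ - 2*R)) with hmdef
      have hm : 0 < m :=
        lt_min (lt_min (by linarith) (by linarith)) (lt_min (by linarith) (by linarith))
      obtain ⟨ε, hε0, hεt, hεc⟩ := ext m hm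
      have hTε : T + ε ∈ S := by
        refine ⟨⟨by linarith, hεt⟩, ?_⟩
        intro τ hτ
        rcases le_or_gt τ T with hτT | hτT
        · exact hTS.2 τ ⟨hτ.1, hτT⟩
        · have hτI : τ ∈ Set.Icc T (T+ε) := ⟨hτT.le, hτ.2⟩
          have hτt : τ ≤ t := le_trans hτ.2 hεt
          have hann : ∀ σ ∈ Set.Icc T (T+ε), R ≤ ‖y σ‖ ∧ ‖y σ‖ ≤ R' := by
            intro σ hσ
            have h := abs_lt.mp (hεc σ hσ)
            have hA : m ≤ ‖y T‖ - R := (min_le_left _ _).trans (min_le_left _ _)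
            have hB : m ≤ R' - ‖y T‖ := (min_le_left _ _).trans (min_le_right _ _)
            constructor <;> linarith [h.1, h.2]
          have hp3 : ‖y τ‖ ≤ 2*‖y 0‖ := by
            have h := abs_lt.mp (hεc τ hτI)
            have hCm : m ≤ 2*‖y 0‖ - ‖y T‖ := (min_le_right _ _).trans (min_le_left _ _)
            linarith [h.2]
          have hbnd2 : ∀ σ ∈ Set.Icc T τ, ‖u₀ (y σ)‖ ≤ 2*U*R'^(1/κ) := by
            intro σ hσ
            have hσ' : σ ∈ Set.Icc T (T+ε) := ⟨hσ.1, hσ.2.trans hτ.2⟩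
            have h := hann σ hσ'
            have h5 : (1+‖y σ‖)^(1/κ) ≤ 2*R'^(1/κ) :=
              rpow_growth_aux hκ.le (by norm_num) hR'0.le (by positivity)
                (by linarith [h.2])
            calc ‖u₀ (y σ)‖ ≤ U * (1+‖y σ‖)^(1/κ) := hu₀ (y σ) h.1 h.2
            _ ≤ U * (2*R'^(1/κ)) := mul_le_mul_of_nonneg_left h5 hU0.le
            _ = 2*U*R'^(1/κ) := by ring
          have hd2 := disp T τ (2*U*R'^(1/κ)) hT0 hτt hbnd2 τ ⟨hτT.le, le_rfl⟩
          have htri : ‖y τ‖ - ‖y T‖ ≤ ‖y τ - y T‖ := norm_sub_norm_le _ _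
          have hM' : (0:ℝ) ≤ U*((τ-T)*R'^(1/κ)) :=
            mul_nonneg hU0.le (mul_nonneg (by linarith) hR'k.le)
          have e2 : 2*U*R'^(1/κ)*(τ-T) ≤ 4*(C-1)*U*(τ-T)*R'^(1/κ) := by
            calc 2*U*R'^(1/κ)*(τ-T) = 2*(U*((τ-T)*R'^(1/κ))) := by ring
            _ ≤ (4*(C-1))*(U*((τ-T)*R'^(1/κ))) :=
                mul_le_mul_of_nonneg_right (by linarith) hM'
            _ = 4*(C-1)*U*(τ-T)*R'^(1/κ) := by ring
          have hp2 : ‖y τ‖ ≤ R' - 4*(C-1)*U*(t-τ)*R'^(1/κ) := by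
            linarith [hPT.2.1, hd2, htri, e2]
          -- part 1 : stay above 2R, which dominates the lower barrier
          have hp1 : R + 4*(C-1)*U*(t-τ)*R^(1/κ) ≤ ‖y τ‖ := by
            have h := abs_lt.mp (hεc τ hτI)
            have hDm : m ≤ ‖y T‖ - 2*R := (min_le_right _ _).trans (min_le_right _ _)
            have e : 4*(C-1)*U*(t-τ)*R^(1/κ) ≤ 4*(C-1)*U*t*R^(1/κ) := by
              have hnn : (0:ℝ) ≤ (4*(C-1))*(U*(τ*R^(1/κ))) :=
                mul_nonneg (by linarith) (mul_nonneg hU0.le (mul_nonneg hτ.1 hRk.le))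
              linarith
            linarith [h.1, h4small]
          exact ⟨hp1, hp2, hp3⟩
      have : T + ε ≤ T := le_csSup hbdd hTε
      linarith
  have htS : t ∈ S := by rw [← hTeq]; exact hTS
  -- conclusions
  intro s hs
  have hP := htS.2 s hs
  have hB : ∀ τ ∈ Set.Icc (0:ℝ) s, ‖u₀ (y τ)‖ ≤ 3*U*‖y 0‖^(1/κ) := by
    intro τ hτ
    exact hBall t htS τ ⟨hτ.1, hτ.2.trans hs.2⟩
  have hd0 := disp 0 s (3*U*‖y 0‖^(1/κ)) le_rfl hs.2 hB s ⟨hs.1, le_rfl⟩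
  have hfinal : ‖y s - y 0‖ ≤ (C-1)*U*t*‖y 0‖^(1/κ) := by
    have c1 : (0:ℝ) ≤ 3*U*‖y 0‖^(1/κ) := by positivity
    have e1 := mul_le_mul_of_nonneg_left hs.2 c1
    have e2 : 3*(U*(t*‖y 0‖^(1/κ))) ≤ (C-1)*(U*(t*‖y 0‖^(1/κ))) :=
      mul_le_mul_of_nonneg_right (by linarith) (by positivity)
    have e3 : (C-1)*(U*(t*‖y 0‖^(1/κ))) = (C-1)*U*t*‖y 0‖^(1/κ) := by ring
    have e4 : 3*U*‖y 0‖^(1/κ)*t = 3*(U*(t*‖y 0‖^(1/κ))) := by ring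
    linarith [hd0, e1, e2]
  have htri1 : ‖y s‖ - ‖y 0‖ ≤ ‖y s - y 0‖ := norm_sub_norm_le _ _
  have htri2 : ‖y 0‖ - ‖y s‖ ≤ ‖y s - y 0‖ := by
    have h := norm_sub_norm_le (y 0) (y s)
    rwa [norm_sub_rev] at h
  refine ⟨⟨hP.1, hP.2.1⟩, by linarith [hdispa], by linarith [hdispa], hfinal⟩
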